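/- For every finite hypergraph H, the unique-maximum choice number satisfies χ^um_ch(H) ≤ Δ(H) + 1, where Δ(H) denotes the maximum vertex degree (maximum number of hyperedges containing a single vertex). -/
import Mathlib

/-- Greedy induction: if every active edge lies inside the uncolored set `U` and each
vertex of `U` has a list larger than its degree in the active edges, then we can color
`U` from the lists with a unique maximum on every active edge. -/
theorem um_aux {V : Type} [Fintype V] [DecidableEq V] :
    ∀ (U : Finset V) (E' : Finset (Finset V)) (L : V → Finset ℕ),
      (∀ S ∈ E', S ⊆ U) →
      (∀ v ∈ U, (E'.filter (fun S => v ∈ S)).card + 1 ≤ (L v).card) →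
      ∃ C : V → ℕ, (∀ v ∈ U, C v ∈ L v) ∧
        ∀ S ∈ E', S.Nonempty → ∃ v ∈ S, ∀ u ∈ S, u ≠ v → C u < C v := by
  intro U
  induction U using Finset.strongInductionOn with
  | _ U IH =>
    intro E' L hsub hdeg
    rcases U.eq_empty_or_nonempty with rfl | hU
    · refine ⟨fun _ => 0, by simp, ?_⟩
      intro S hS hSne
      exact absurd (hsub S hS hSne.choose_spec) (by simp)
    · -- pick a vertex attaining the global maximum list value
      set M : ℕ := U.sup (fun w => (L w).sup id) with hM
      obtain ⟨v, hvU, hveq⟩ := Finset.exists_mem_eq_sup U hU (fun w => (L w).sup id)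
      have hLv : (L v).Nonempty := by
        have := hdeg v hvU
        exact Finset.card_pos.mp (by omega)
      obtain ⟨c, hcL, hceq⟩ := Finset.exists_mem_eq_sup (L v) hLv id
      have hcM : c = M := by rw [hM, hveq]; exact hceq.symm
      subst hcM
      -- everyone's list values are ≤ M
      have hle : ∀ u ∈ U, ∀ x ∈ L u, x ≤ M := by
        intro u hu x hx
        calc x = id x := rfl
        _ ≤ (L u).sup id := Finset.le_sup hx
        _ ≤ M := hM ▸ Finset.le_sup (f := fun w => (L w).sup id) hu
      -- new data
      set E'' : Finset (Finset V) := E'.filter (fun S => v ∉ S) with hE''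
      set L' : V → Finset ℕ := fun u =>
        if (E'.filter (fun S => v ∈ S ∧ u ∈ S)).Nonempty then (L u).erase M else L u
        with hL'
      have hL'sub : ∀ u, L' u ⊆ L u := by
        intro u
        simp only [hL']
        split
        · exact Finset.erase_subset _ _
        · exact Finset.Subset.refl _
      have hsub' : ∀ S ∈ E'', S ⊆ U.erase v := by
        intro S hS
        rw [hE'', Finset.mem_filter] at hS
        intro u hu
        exact Finset.mem_erase.mpr ⟨fun h => hS.2 (h ▸ hu), hsub S hS.1 hu⟩
      have hdeg' : ∀ u ∈ U.erase v,
          (E''.filter (fun S => u ∈ S)).card + 1 ≤ (L' u).card := by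
        intro u hu
        have huU : u ∈ U := Finset.mem_of_mem_erase hu
        by_cases hsh : (E'.filter (fun S => v ∈ S ∧ u ∈ S)).Nonempty
        · obtain ⟨S₀, hS₀⟩ := hsh
          rw [Finset.mem_filter] at hS₀
          have hlt : (E''.filter (fun S => u ∈ S)).card <
              (E'.filter (fun S => u ∈ S)).card := by
            apply Finset.card_lt_card
            constructor
            · intro S hS
              simp only [hE'', Finset.mem_filter] at hS ⊢
              exact ⟨hS.1.1, hS.2⟩
            · intro hcon
              have := hcon (Finset.mem_filter.mpr ⟨hS₀.1, hS₀.2.2⟩)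
              simp only [hE'', Finset.mem_filter] at this
              exact this.1.2 hS₀.2.1
          have hsh' : (E'.filter (fun S => v ∈ S ∧ u ∈ S)).Nonempty :=
            ⟨S₀, Finset.mem_filter.mpr hS₀⟩
          have hLu' : L' u = (L u).erase M := if_pos hsh'
          have hcard : (L u).card - 1 ≤ (L' u).card := by
            rw [hLu', Finset.card_erase_eq_ite]
            split <;> omega
          have := hdeg u huU
          omega
        · have hL'u : L' u = L u := if_neg hsh
          rw [hL'u]
          have hsubset : E''.filter (fun S => u ∈ S) ⊆ E'.filter (fun S => u ∈ S) := by
            intro S hS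
            simp only [hE'', Finset.mem_filter] at hS ⊢
            exact ⟨hS.1.1, hS.2⟩
          have := Finset.card_le_card hsubset
          have := hdeg u huU
          omega
      obtain ⟨C, hC1, hC2⟩ := IH (U.erase v) (Finset.erase_ssubset hvU) E'' L' hsub' hdeg'
      refine ⟨Function.update C v M, ?_, ?_⟩
      · intro u hu
        by_cases huv : u = v
        · subst huv; simpa [Function.update_self] using hcL
        · rw [Function.update_of_ne huv]
          exact hL'sub u (hC1 u (Finset.mem_erase.mpr ⟨huv, hu⟩))
      · intro S hS hSne
        by_cases hvS : v ∈ S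
        · refine ⟨v, hvS, ?_⟩
          intro u huS huv
          have huU : u ∈ U.erase v :=
            Finset.mem_erase.mpr ⟨huv, hsub S hS huS⟩
          have hCu : C u ∈ L' u := hC1 u huU
          have hshared : (E'.filter (fun S' => v ∈ S' ∧ u ∈ S')).Nonempty :=
            ⟨S, Finset.mem_filter.mpr ⟨hS, hvS, huS⟩⟩
          rw [show L' u = (L u).erase M from if_pos hshared] at hCu
          have hne : C u ≠ M := Finset.ne_of_mem_erase hCu
          have hleM : C u ≤ M :=
            hle u (Finset.mem_of_mem_erase huU) _ (Finset.mem_of_mem_erase hCu)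
          rw [Function.update_of_ne huv, Function.update_self]
          omega
        · have hS'' : S ∈ E'' := by
            rw [hE'', Finset.mem_filter]; exact ⟨hS, hvS⟩
          obtain ⟨w, hwS, hw⟩ := hC2 S hS'' hSne
          refine ⟨w, hwS, ?_⟩
          intro u huS huv
          have huvne : u ≠ v := fun h => hvS (h ▸ huS)
          have hwvne : w ≠ v := fun h => hvS (h ▸ hwS)
          rw [Function.update_of_ne huvne, Function.update_of_ne hwvne]
          exact hw u huS huv

/-- The unique-maximum choice number of a finite hypergraph is at most `Δ(H) + 1`:
for every family of lists (of positive integers) each of size at least `Δ(H) + 1`,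
`H` admits a unique-maximum coloring from the lists. -/
theorem um_choice_le_max_degree_add_one {V : Type} [Fintype V] [DecidableEq V]
    (E : Finset (Finset V)) (L : V → Finset ℕ)
    (hpos : ∀ v : V, ∀ c ∈ L v, 0 < c)
    (hsize : ∀ v : V,
      (Finset.univ.sup fun u => (E.filter (fun S => u ∈ S)).card) + 1 ≤ (L v).card) :
    ∃ C : V → ℕ, (∀ v, C v ∈ L v) ∧
      ∀ S ∈ E, S.Nonempty → ∃ v ∈ S, ∀ u ∈ S, u ≠ v → C u < C v := by
  obtain ⟨C, hC1, hC2⟩ := um_aux Finset.univ E L (fun S _ => S.subset_univ)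
    (fun v _ => le_trans (by
      have : (E.filter (fun S => v ∈ S)).card ≤
          Finset.univ.sup fun u => (E.filter (fun S => u ∈ S)).card :=
        Finset.le_sup (f := fun u => (E.filter (fun S => u ∈ S)).card) (Finset.mem_univ v)
      omega) (hsize v))
  exact ⟨C, fun v => hC1 v (Finset.mem_univ v), hC2⟩
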